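/- If A is an n×n irreducible 0-1 matrix with spectral radius 1, then A is permutation similar to the n×n basic circulant matrix C_n (the adjacency matrix of the directed n-cycle). -/

import Mathlib

open Filter Topology
open scoped ENNReal NNReal


open Matrix

/-- The spectral radius of a complex matrix: the supremum of moduli of its eigenvalues. -/
noncomputable def specRad {n : ℕ} (M : Matrix (Fin n) (Fin n) ℂ) : ℝ :=
  sSup {x : ℝ | ∃ μ ∈ spectrum ℂ M, x = ‖μ‖}

/-- A 0-1 matrix. -/
def IsZeroOneR {n : ℕ} (A : Matrix (Fin n) (Fin n) ℝ) : Prop :=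
  ∀ i j, A i j = 0 ∨ A i j = 1

/-- Irreducibility of a nonnegative matrix: its digraph is strongly connected;
a 1×1 matrix is regarded as irreducible. -/
def Irred {n : ℕ} (A : Matrix (Fin n) (Fin n) ℝ) : Prop :=
  n = 1 ∨ ∀ i j : Fin n, ∃ m : ℕ, 1 ≤ m ∧ 0 < (A ^ m) i j

/-- The n×n basic circulant matrix: entry (i,j) is 1 iff j ≡ i+1 (mod n). -/
def basicCirculant (n : ℕ) : Matrix (Fin n) (Fin n) ℝ :=
  Matrix.of fun i j => if (j : ℕ) = ((i : ℕ) + 1) % n then 1 else 0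

set_option maxHeartbeats 1000000
set_option synthInstance.maxHeartbeats 1000000

attribute [local instance] Matrix.linftyOpNormedRing Matrix.linftyOpNormedAlgebra

lemma entry_le_nnnorm {n : ℕ} (M : Matrix (Fin n) (Fin n) ℂ) (i j : Fin n) :
    ‖M i j‖₊ ≤ ‖M‖₊ := by
  rw [Matrix.linfty_opNNNorm_def]
  exact le_trans (Finset.single_le_sum (f := fun k => ‖M i k‖₊) (fun _ _ => zero_le)
    (Finset.mem_univ j))
    (Finset.le_sup (f := fun i => ∑ j, ‖M i j‖₊) (Finset.mem_univ i))

lemma pow_entry_mul_le {n : ℕ} (B : Matrix (Fin n) (Fin n) ℕ) (a b : ℕ) (i j k : Fin n) :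
    (B ^ a) i j * (B ^ b) j k ≤ (B ^ (a + b)) i k := by
  rw [pow_add, Matrix.mul_apply]
  exact Finset.single_le_sum (f := fun x => (B ^ a) i x * (B ^ b) x k)
    (fun _ _ => Nat.zero_le _) (Finset.mem_univ j)

lemma pow_entry_one_le {n : ℕ} (B : Matrix (Fin n) (Fin n) ℕ) {a b : ℕ} {i j k : Fin n}
    (h1 : 1 ≤ (B ^ a) i j) (h2 : 1 ≤ (B ^ b) j k) : 1 ≤ (B ^ (a + b)) i k :=
  le_trans (by calc (1 : ℕ) = 1 * 1 := rfl
                _ ≤ (B ^ a) i j * (B ^ b) j k := Nat.mul_le_mul h1 h2)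
    (pow_entry_mul_le B a b i j k)

lemma pow_geom {n : ℕ} (B : Matrix (Fin n) (Fin n) ℕ) (N : ℕ) (i : Fin n)
    (h2 : 2 ≤ (B ^ N) i i) : ∀ k, 2 ^ k ≤ (B ^ (k * N)) i i := by
  intro k
  induction k with
  | zero => simp [Matrix.one_apply]
  | succ k ih =>
    calc 2 ^ (k + 1) = 2 ^ k * 2 := by ring
    _ ≤ (B ^ (k * N)) i i * (B ^ N) i i := Nat.mul_le_mul ih h2
    _ ≤ (B ^ (k * N + N)) i i := pow_entry_mul_le B (k * N) N i i i
    _ = (B ^ ((k + 1) * N)) i i := by rw [Nat.succ_mul]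

lemma not_specRad_one {n : ℕ} (B : Matrix (Fin n) (Fin n) ℕ) (N : ℕ) (hN : 1 ≤ N) (i : Fin n)
    (h2 : 2 ≤ (B ^ N) i i) : specRad (B.map (Nat.cast : ℕ → ℂ)) ≠ 1 := by
  intro hρ
  set Ac := B.map (Nat.cast : ℕ → ℂ) with hAc
  have hpow : ∀ m : ℕ, Ac ^ m = (B ^ m).map (Nat.cast : ℕ → ℂ) := by
    intro m
    have h := map_pow ((Nat.castRingHom ℂ).mapMatrix) B m
    simpa [RingHom.mapMatrix_apply] using h.symm
  have hbdd : BddAbove {x : ℝ | ∃ μ ∈ spectrum ℂ Ac, x = ‖μ‖} := by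
    refine ⟨‖Ac‖ * ‖(1 : Matrix (Fin n) (Fin n) ℂ)‖, ?_⟩
    rintro x ⟨μ, hμ, rfl⟩
    have := spectrum.subset_closedBall_norm_mul Ac hμ
    simpa [Metric.mem_closedBall, Complex.dist_eq] using this
  have hub : spectralRadius ℂ Ac ≤ 1 := by
    rw [spectralRadius]
    refine iSup₂_le fun μ hμ => ?_
    have h1 : ‖μ‖ ≤ 1 := by
      have := le_csSup hbdd (by exact ⟨μ, hμ, rfl⟩ :
        ‖μ‖ ∈ {x : ℝ | ∃ μ ∈ spectrum ℂ Ac, x = ‖μ‖})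
      rwa [← specRad, hρ] at this
    have h2' : ‖μ‖₊ ≤ 1 := by
      rw [← NNReal.coe_le_coe]
      simpa [coe_nnnorm] using h1
    exact_mod_cast ENNReal.coe_le_coe.mpr h2'
  have hgel := spectrum.pow_nnnorm_pow_one_div_tendsto_nhds_spectralRadius Ac
  have hsub : Tendsto (fun k : ℕ => k * N) atTop atTop :=
    tendsto_atTop_mono (fun k => Nat.le_mul_of_pos_right k (by omega)) tendsto_id
  have h2t : Tendsto (fun k : ℕ => (‖Ac ^ (k * N)‖₊ : ℝ≥0∞) ^ (1 / (k * N : ℕ) : ℝ)) atTop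
      (𝓝 (spectralRadius ℂ Ac)) := hgel.comp hsub
  have hlow : ∀ᶠ k : ℕ in atTop,
      (2 : ℝ≥0∞) ^ ((1 : ℝ) / N) ≤ (‖Ac ^ (k * N)‖₊ : ℝ≥0∞) ^ (1 / (k * N : ℕ) : ℝ) := by
    filter_upwards [eventually_ge_atTop 1] with k hk
    have hBk : (2 : ℕ) ^ k ≤ (B ^ (k * N)) i i := pow_geom B N i h2 k
    have hnorm : ((2 : ℝ≥0∞)) ^ (k : ℕ) ≤ (‖Ac ^ (k * N)‖₊ : ℝ≥0∞) := by
      have he : ‖(Ac ^ (k * N)) i i‖₊ = ((B ^ (k * N)) i i : ℝ≥0) := by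
        rw [hpow]
        simp [Matrix.map_apply]
      have hx : ((2 : ℝ≥0)) ^ k ≤ ‖(Ac ^ (k * N)) i i‖₊ := by
        rw [he]
        exact_mod_cast hBk
      calc ((2 : ℝ≥0∞)) ^ k = (((2 : ℝ≥0)) ^ k : ℝ≥0) := by norm_cast
      _ ≤ (‖(Ac ^ (k * N)) i i‖₊ : ℝ≥0∞) := by exact_mod_cast hx
      _ ≤ _ := by exact_mod_cast entry_le_nnnorm _ i i
    have hexp : (0 : ℝ) ≤ 1 / (k * N : ℕ) := by positivity
    calc (2 : ℝ≥0∞) ^ ((1 : ℝ) / N) = ((2 : ℝ≥0∞) ^ (k : ℕ)) ^ (1 / (k * N : ℕ) : ℝ) := by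
          rw [← ENNReal.rpow_natCast (2 : ℝ≥0∞) k, ← ENNReal.rpow_mul]
          congr 1
          have hk' : (k : ℝ) ≠ 0 := Nat.cast_ne_zero.mpr (by omega)
          have hN' : (N : ℝ) ≠ 0 := Nat.cast_ne_zero.mpr (by omega)
          push_cast
          field_simp
    _ ≤ _ := ENNReal.rpow_le_rpow hnorm hexp
  have hge : (2 : ℝ≥0∞) ^ ((1 : ℝ) / N) ≤ spectralRadius ℂ Ac := ge_of_tendsto h2t hlow
  have hone : (1 : ℝ≥0∞) < (2 : ℝ≥0∞) ^ ((1 : ℝ) / N) :=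
    ENNReal.one_lt_rpow (by norm_num) (by positivity)
  exact absurd (lt_of_lt_of_le hone (hge.trans hub)) (lt_irrefl _)

theorem stmt0 {n : ℕ} (hn : 1 ≤ n) (A : Matrix (Fin n) (Fin n) ℝ)
    (h01 : IsZeroOneR A) (hirr : Irred A)
    (hρ : specRad (A.map (Complex.ofReal)) = 1) :
    ∃ σ : Equiv.Perm (Fin n), ∀ i j, A i j = basicCirculant n (σ i) (σ j) := by
  classical
  have hn' : 0 < n := hn
  -- Reduce to the strong-connectivity hypothesis
  have hcon : ∀ i j : Fin n, ∃ m : ℕ, 1 ≤ m ∧ 0 < (A ^ m) i j := by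
    rcases hirr with h1 | h
    · subst h1
      intro i j
      have hi : i = 0 := Subsingleton.elim i 0
      have hj : j = 0 := Subsingleton.elim j 0
      rcases h01 0 0 with h0 | h0
      · exfalso
        have hA : A = 0 := by
          ext a b
          have ha : a = 0 := Subsingleton.elim a 0
          have hb : b = 0 := Subsingleton.elim b 0
          rw [ha, hb, h0]; rfl
        rw [hA] at hρ
        have hmap : (0 : Matrix (Fin 1) (Fin 1) ℝ).map Complex.ofReal = 0 := by
          ext a b; simp
        rw [hmap] at hρ
        have hspec : spectrum ℂ (0 : Matrix (Fin 1) (Fin 1) ℂ) = {0} := spectrum.zero_eq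
        have hset : {x : ℝ | ∃ μ ∈ spectrum ℂ (0 : Matrix (Fin 1) (Fin 1) ℂ),
            x = ‖μ‖} = {0} := by
          rw [hspec]; ext x; simp
        rw [specRad, hset] at hρ
        rw [csSup_singleton] at hρ
        norm_num at hρ
      · subst hi; subst hj
        exact ⟨1, le_refl 1, by rw [pow_one, h0]; norm_num⟩
    · exact h
  -- Pass to the 0-1 matrix over ℕ
  set B : Matrix (Fin n) (Fin n) ℕ := Matrix.of (fun i j => if A i j = 0 then 0 else 1)
    with hBdef
  have hcast : ∀ i j, A i j = ((B i j : ℕ) : ℝ) := by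
    intro i j
    rcases h01 i j with h | h <;> simp [hBdef, h]
  have hmapA : A = B.map (Nat.cast : ℕ → ℝ) := by
    ext i j; rw [Matrix.map_apply]; exact hcast i j
  have hApow : ∀ m (i j : Fin n), (A ^ m) i j = (((B ^ m) i j : ℕ) : ℝ) := by
    intro m i j
    have h : (B.map (Nat.cast : ℕ → ℝ)) ^ m = (B ^ m).map (Nat.cast : ℕ → ℝ) := by
      have := map_pow ((Nat.castRingHom ℝ).mapMatrix) B m
      simpa [RingHom.mapMatrix_apply] using this.symm
    rw [hmapA, h, Matrix.map_apply]
  have hconB : ∀ i j : Fin n, ∃ m, 1 ≤ m ∧ 0 < (B ^ m) i j := by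
    intro i j
    obtain ⟨m, hm, hpos⟩ := hcon i j
    refine ⟨m, hm, ?_⟩
    rw [hApow] at hpos
    exact_mod_cast hpos
  have hρ' : specRad (B.map (Nat.cast : ℕ → ℂ)) = 1 := by
    have hmm : A.map Complex.ofReal = B.map (Nat.cast : ℕ → ℂ) := by
      ext i j
      rw [Matrix.map_apply, Matrix.map_apply, hcast i j]
      simp
    rwa [hmm] at hρ
  -- no two out-neighbours
  have notwoOut : ∀ i j1 j2 : Fin n, B i j1 ≠ 0 → B i j2 ≠ 0 → j1 = j2 := by
    intro i j1 j2 h1 h2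
    by_contra hne
    obtain ⟨p, hp1, hp⟩ := hconB j1 i
    obtain ⟨q, hq1, hq⟩ := hconB j2 i
    have hb1 : 1 ≤ B i j1 := Nat.one_le_iff_ne_zero.mpr h1
    have hb2 : 1 ≤ B i j2 := Nat.one_le_iff_ne_zero.mpr h2
    have hb1' : 1 ≤ (B ^ 1) i j1 := by rwa [pow_one]
    have hb2' : 1 ≤ (B ^ 1) i j2 := by rwa [pow_one]
    set M := p + q + 1 with hM
    have hvii : 1 ≤ (B ^ (1 + q)) i i := pow_entry_one_le B hb2' hq
    have huii : 1 ≤ (B ^ (1 + p)) i i := pow_entry_one_le B hb1' hp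
    have hw1 : 1 ≤ (B ^ M) j1 i := by
      have := pow_entry_one_le B hp hvii
      rwa [show p + (1 + q) = M by omega] at this
    have hw2 : 1 ≤ (B ^ M) j2 i := by
      have := pow_entry_one_le B hq huii
      rwa [show q + (1 + p) = M by omega] at this
    have h2' : 2 ≤ (B ^ (1 + M)) i i := by
      have hmul : (B ^ (1 + M)) i i = ∑ k, B i k * (B ^ M) k i := by
        rw [pow_add, pow_one, Matrix.mul_apply]
      rw [hmul]
      calc (2 : ℕ) = 1 * 1 + 1 * 1 := rfl
      _ ≤ B i j1 * (B ^ M) j1 i + B i j2 * (B ^ M) j2 i :=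
          Nat.add_le_add (Nat.mul_le_mul hb1 hw1) (Nat.mul_le_mul hb2 hw2)
      _ = ∑ k ∈ ({j1, j2} : Finset (Fin n)), B i k * (B ^ M) k i :=
          (Finset.sum_pair (f := fun k => B i k * (B ^ M) k i) hne).symm
      _ ≤ ∑ k, B i k * (B ^ M) k i :=
          Finset.sum_le_sum_of_subset (Finset.subset_univ _)
    exact not_specRad_one B (1 + M) (by omega) i h2' hρ'
  -- no two in-neighbours
  have notwoIn : ∀ j i1 i2 : Fin n, B i1 j ≠ 0 → B i2 j ≠ 0 → i1 = i2 := by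
    intro j i1 i2 h1 h2
    by_contra hne
    obtain ⟨p, hp1, hp⟩ := hconB j i1
    obtain ⟨q, hq1, hq⟩ := hconB j i2
    have hb1 : 1 ≤ B i1 j := Nat.one_le_iff_ne_zero.mpr h1
    have hb2 : 1 ≤ B i2 j := Nat.one_le_iff_ne_zero.mpr h2
    have hb1' : 1 ≤ (B ^ 1) i1 j := by rwa [pow_one]
    have hb2' : 1 ≤ (B ^ 1) i2 j := by rwa [pow_one]
    set M := p + q + 1 with hM
    have hvjj : 1 ≤ (B ^ (q + 1)) j j := pow_entry_one_le B hq hb2'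
    have hujj : 1 ≤ (B ^ (p + 1)) j j := pow_entry_one_le B hp hb1'
    have hw1 : 1 ≤ (B ^ M) j i1 := by
      have := pow_entry_one_le B hvjj hp
      rwa [show q + 1 + p = M by omega] at this
    have hw2 : 1 ≤ (B ^ M) j i2 := by
      have := pow_entry_one_le B hujj hq
      rwa [show p + 1 + q = M by omega] at this
    have h2' : 2 ≤ (B ^ (M + 1)) j j := by
      have hmul : (B ^ (M + 1)) j j = ∑ k, (B ^ M) j k * B k j := by
        rw [pow_add, pow_one, Matrix.mul_apply]
      rw [hmul]
      calc (2 : ℕ) = 1 * 1 + 1 * 1 := rfl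
      _ ≤ (B ^ M) j i1 * B i1 j + (B ^ M) j i2 * B i2 j :=
          Nat.add_le_add (Nat.mul_le_mul hw1 hb1) (Nat.mul_le_mul hw2 hb2)
      _ = ∑ k ∈ ({i1, i2} : Finset (Fin n)), (B ^ M) j k * B k j :=
          (Finset.sum_pair (f := fun k => (B ^ M) j k * B k j) hne).symm
      _ ≤ ∑ k, (B ^ M) j k * B k j :=
          Finset.sum_le_sum_of_subset (Finset.subset_univ _)
    exact not_specRad_one B (M + 1) (by omega) j h2' hρ'
  -- every row has an out-neighbour
  have existsOut : ∀ i : Fin n, ∃ j, B i j ≠ 0 := by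
    intro i
    obtain ⟨m, hm1, hm⟩ := hconB i i
    obtain ⟨k, rfl⟩ : ∃ k, m = k + 1 := ⟨m - 1, by omega⟩
    rw [pow_succ', Matrix.mul_apply] at hm
    obtain ⟨j, _, hj⟩ := Finset.exists_ne_zero_of_sum_ne_zero (Nat.pos_iff_ne_zero.mp hm)
    exact ⟨j, fun h0 => hj (by rw [h0, zero_mul])⟩
  choose π hπ using existsOut
  have huniqOut : ∀ i j, B i j ≠ 0 → j = π i := fun i j h => notwoOut i j (π i) h (hπ i)
  have hπinj : Function.Injective π := by
    intro i1 i2 h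
    exact notwoIn (π i1) i1 i2 (hπ i1) (by rw [h]; exact hπ i2)
  -- powers follow iterates of π
  have hiter : ∀ m (i j : Fin n), (B ^ m) i j ≠ 0 → j = π^[m] i := by
    intro m
    induction m with
    | zero =>
      intro i j h
      rw [pow_zero] at h
      simp only [Matrix.one_apply, ne_eq, ite_eq_right_iff, not_forall] at h
      exact h.1.symm
    | succ m ih =>
      intro i j h
      rw [pow_succ, Matrix.mul_apply] at h
      obtain ⟨k, _, hk⟩ := Finset.exists_ne_zero_of_sum_ne_zero h
      have h1 : (B ^ m) i k ≠ 0 := fun h0 => hk (by rw [h0, zero_mul])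
      have h2 : B k j ≠ 0 := fun h0 => hk (by rw [h0, mul_zero])
      rw [Function.iterate_succ_apply', ← ih i k h1]
      exact huniqOut k j h2
  have hreach : ∀ i j : Fin n, ∃ m, 1 ≤ m ∧ π^[m] i = j := by
    intro i j
    obtain ⟨m, hm1, hm⟩ := hconB i j
    exact ⟨m, hm1, (hiter m i j (Nat.pos_iff_ne_zero.mp hm)).symm⟩
  -- the orbit map
  set z : Fin n := ⟨0, hn'⟩ with hz
  set e : Fin n → Fin n := fun k => π^[k.val] z with he
  have heinj_aux : ∀ a b : Fin n, a.val < b.val → e a ≠ e b := by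
    intro a b hab heq
    set d := b.val - a.val with hd
    have hd1 : 1 ≤ d := by omega
    have hdn : d < n := by have := b.isLt; omega
    set x := π^[a.val] z with hx
    have hper : π^[d] x = x := by
      have h2 : π^[d + a.val] z = π^[d] (π^[a.val] z) := Function.iterate_add_apply π d a.val z
      rw [hx, ← h2, show d + a.val = b.val by omega]
      exact heq.symm
    have hqr : ∀ q r, π^[q * d + r] x = π^[r] x := by
      intro q r
      induction q with
      | zero => simp
      | succ q ih =>
        have hE : (q + 1) * d + r = (q * d + r) + d := by ring
        rw [hE, Function.iterate_add_apply, hper, ih]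
    have hcover : ∀ j : Fin n, ∃ r, r < d ∧ π^[r] x = j := by
      intro j
      obtain ⟨m, _, hm⟩ := hreach x j
      refine ⟨m % d, Nat.mod_lt _ (by omega), ?_⟩
      have hh := hqr (m / d) (m % d)
      rw [Nat.div_add_mod'] at hh
      rw [← hh]
      exact hm
    have himg : (Finset.univ : Finset (Fin n)) ⊆
        (Finset.range d).image (fun r => π^[r] x) := by
      intro j _
      obtain ⟨r, hr, hrx⟩ := hcover j
      exact Finset.mem_image.mpr ⟨r, Finset.mem_range.mpr hr, hrx⟩
    have hcard := Finset.card_le_card himg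
    have hfin : n ≤ d := by
      calc n = (Finset.univ : Finset (Fin n)).card := by simp
      _ ≤ ((Finset.range d).image (fun r => π^[r] x)).card := hcard
      _ ≤ (Finset.range d).card := Finset.card_image_le
      _ = d := Finset.card_range d
    omega
  have heinj : Function.Injective e := by
    intro a b h
    by_contra hne
    rcases lt_trichotomy a.val b.val with hlt | heqv | hgt
    · exact heinj_aux a b hlt h
    · exact hne (Fin.ext heqv)
    · exact heinj_aux b a hgt h.symm
  have hebij : Function.Bijective e := Finite.injective_iff_bijective.mp heinj
  have hzn : π^[n] z = z := by
    obtain ⟨c, hc⟩ := hebij.2 (π^[n] z)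
    by_cases hc0 : c.val = 0
    · calc π^[n] z = e c := hc.symm
      _ = π^[c.val] z := rfl
      _ = z := by rw [hc0]; rfl
    · exfalso
      have h1 : π^[n] z = π^[c.val] z := hc.symm
      have hinj2 : Function.Injective (π^[c.val]) := hπinj.iterate c.val
      have h2 : π^[c.val] (π^[n - c.val] z) = π^[c.val] z := by
        rw [← Function.iterate_add_apply, show c.val + (n - c.val) = n by
          have := c.isLt; omega]
        exact h1
      have h3 : π^[n - c.val] z = z := hinj2 h2
      have h4 : e ⟨n - c.val, by omega⟩ = e ⟨0, hn'⟩ := by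
        show π^[n - c.val] z = π^[0] z
        rw [h3]; rfl
      have h5 := heinj h4
      have h6 : n - c.val = 0 := congrArg Fin.val h5
      have := c.isLt
      omega
  refine ⟨(Equiv.ofBijective e hebij).symm, ?_⟩
  intro i j
  set a := (Equiv.ofBijective e hebij).symm i with ha
  set b := (Equiv.ofBijective e hebij).symm j with hb
  have hia : e a = i := (Equiv.ofBijective e hebij).apply_symm_apply i
  have hjb : e b = j := (Equiv.ofBijective e hebij).apply_symm_apply j
  have hstep : π i = e ⟨(a.val + 1) % n, Nat.mod_lt _ hn'⟩ := by
    have h1 : π i = π^[a.val + 1] z := by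
      rw [← hia]
      show π (π^[a.val] z) = π^[a.val + 1] z
      exact (Function.iterate_succ_apply' π a.val z).symm
    show π i = π^[(a.val + 1) % n] z
    obtain hE | hE : a.val + 1 = n ∨ a.val + 1 < n := by omega
    · rw [h1, hE, hzn, Nat.mod_self]
      rfl
    · rw [h1, Nat.mod_eq_of_lt hE]
  by_cases hcase : (b : ℕ) = (a.val + 1) % n
  · have hj : j = π i := by
      rw [hstep, ← hjb]
      congr 1
      exact Fin.ext hcase
    have hBij : B i j ≠ 0 := by rw [hj]; exact hπ i
    have hA1 : A i j = 1 := by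
      rcases h01 i j with h | h
      · exfalso; apply hBij; simp [hBdef, h]
      · exact h
    rw [hA1]
    simp [basicCirculant, hcase]
  · have hAj : A i j = 0 := by
      rcases h01 i j with h | h
      · exact h
      · exfalso
        have hBij : B i j ≠ 0 := by simp [hBdef, h]
        have hji : j = π i := huniqOut i j hBij
        apply hcase
        have hbb : e b = e ⟨(a.val + 1) % n, Nat.mod_lt _ hn'⟩ := by
          rw [hjb, hji, hstep]
        exact congrArg Fin.val (heinj hbb)
    rw [hAj]
    simp [basicCirculant, hcase]
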